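/- (Case II recoloring of the parity-seeking delete) Suppose in a 2-3 red-black tree the node x is the black root of a deficient subtree, its sibling y is black, and both children of y are black or nil. Then recoloring y red produces a configuration in which the subtree rooted at the common parent p of x and y is deficient (ignoring p's color it satisfies the red-black properties, and every path from p to an external node contains one fewer black node than paths through p's sibling), the inorder traversal being unchanged. -/
import Mathlib


inductive Color where
  | red : Color
  | black : Color
deriving DecidableEq

inductive RBTree (α : Type) where
  | nil : RBTree α
  | node : Color → RBTree α → α → RBTree α → RBTree α

namespace RBTree

variable {α : Type}

/-- The color of a tree's root; external (nil) positions count as black. -/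
def color : RBTree α → Color
  | .nil => Color.black
  | .node c _ _ _ => c

/-- Inorder traversal of the keys. -/
def inorder : RBTree α → List α
  | .nil => []
  | .node _ l k r => inorder l ++ k :: inorder r

/-- `BH t n`: every path from the root of `t` to an external node contains
exactly `n` black nodes (property (3)). -/
inductive BH : RBTree α → ℕ → Prop where
  | nil : BH RBTree.nil 0
  | red {l r : RBTree α} {k : α} {n : ℕ} :
      BH l n → BH r n → BH (RBTree.node Color.red l k r) n
  | black {l r : RBTree α} {k : α} {n : ℕ} :
      BH l n → BH r n → BH (RBTree.node Color.black l k r) (n + 1)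

/-- Property (2): every red node has black children (equivalently, a red node
never has a red parent). -/
def NoRedRed : RBTree α → Prop
  | .nil => True
  | .node c l _ r =>
      (c = Color.red → color l = Color.black ∧ color r = Color.black) ∧
      NoRedRed l ∧ NoRedRed r

/-- The 2-3 condition: no node has two red children. -/
def No2Red : RBTree α → Prop
  | .nil => True
  | .node _ l _ r =>
      ¬(color l = Color.red ∧ color r = Color.red) ∧ No2Red l ∧ No2Red r

/-- A red-black tree: black root, no red-red violation, uniform black counts. -/
def IsRB (t : RBTree α) : Prop :=
  color t = Color.black ∧ NoRedRed t ∧ ∃ n, BH t n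

/-- A 2-3 red-black tree: a red-black tree where no node has two red children. -/
def Is23RB (t : RBTree α) : Prop := IsRB t ∧ No2Red t

/-- Recolor the root black. -/
def setBlack : RBTree α → RBTree α
  | .nil => .nil
  | .node _ l k r => .node Color.black l k r

/-- `Occurs s t`: `s` occurs as a subtree of `t`. -/
inductive Occurs : RBTree α → RBTree α → Prop where
  | refl (t : RBTree α) : Occurs t t
  | left {s l : RBTree α} (c : Color) (k : α) (r : RBTree α) :
      Occurs s l → Occurs s (RBTree.node c l k r)
  | right {s r : RBTree α} (c : Color) (k : α) (l : RBTree α) :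
      Occurs s r → Occurs s (RBTree.node c l k r)

/-- `Replace s s' t t'`: `t'` is obtained from `t` by replacing one
occurrence of the subtree `s` by `s'`. -/
inductive Replace (s s' : RBTree α) : RBTree α → RBTree α → Prop where
  | here : Replace s s' s s'
  | left {l l' : RBTree α} (c : Color) (k : α) (r : RBTree α) :
      Replace s s' l l' → Replace s s' (RBTree.node c l k r) (RBTree.node c l' k r)
  | right {r r' : RBTree α} (c : Color) (k : α) (l : RBTree α) :
      Replace s s' r r' → Replace s s' (RBTree.node c l k r) (RBTree.node c l k r')

/-- The list of black-node counts along all root-to-external paths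
(in left-to-right order of the external nodes). -/
def bpaths : RBTree α → List ℕ
  | .nil => [0]
  | .node c l _ r =>
      (bpaths l ++ bpaths r).map (fun m => m + if c = Color.black then 1 else 0)

/-- Height: the maximum number of edges on a path from the root to an external node. -/
def height : RBTree α → ℕ
  | .nil => 0
  | .node _ l _ r => max (height l) (height r) + 1

/-- Number of internal nodes. -/
def size : RBTree α → ℕ
  | .nil => 0
  | .node _ l _ r => size l + size r + 1

end RBTree

open RBTree

/-- Case II recoloring of the parity-seeking delete: in a 2-3
red-black tree, `x` is the black root of a deficient subtree (black-height `n`,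
one less than its sibling's), its sibling `y = node black yl ky yr` is black
and both children of `y` are black or nil; `s` denotes the sibling of the
common parent `p = node cp x kp y` in the ambient tree.  Recoloring `y` red
leaves the inorder traversal unchanged and produces a configuration in which
the subtree rooted at `p` is deficient: ignoring `p`'s color it satisfies the
red-black (2-3) properties, and every path from `p` to an external node
contains one fewer black node than the paths through `p`'s sibling `s`. -/
theorem caseII_recolor_sibling_red
    {α : Type} (cp : Color) (x yl yr s : RBTree α) (kp ky : α) (n : ℕ)
    (hxc : color x = Color.black) (hxrr : NoRedRed x) (hx2 : No2Red x)
    (hxbh : BH x n)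
    (hylc : color yl = Color.black) (hyrc : color yr = Color.black)
    (hyrr : NoRedRed (RBTree.node Color.black yl ky yr))
    (hy2 : No2Red (RBTree.node Color.black yl ky yr))
    (hybh : BH (RBTree.node Color.black yl ky yr) (n + 1))
    (hs : BH s (n + 1 + if cp = Color.black then 1 else 0)) :
    inorder (RBTree.node cp x kp (RBTree.node Color.red yl ky yr)) =
      inorder (RBTree.node cp x kp (RBTree.node Color.black yl ky yr)) ∧
    NoRedRed (setBlack (RBTree.node cp x kp (RBTree.node Color.red yl ky yr))) ∧
    No2Red (RBTree.node cp x kp (RBTree.node Color.red yl ky yr)) ∧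
    BH (RBTree.node cp x kp (RBTree.node Color.red yl ky yr))
      (n + if cp = Color.black then 1 else 0) := by
  obtain ⟨-, hyrrl, hyrrr⟩ := hyrr
  obtain ⟨-, hy2l, hy2r⟩ := hy2
  cases hybh with
  | black hl hr =>
    refine ⟨rfl, ?_, ?_, ?_⟩
    · exact ⟨fun h => by simp at h, hxrr, ⟨fun _ => ⟨hylc, hyrc⟩, hyrrl, hyrrr⟩⟩
    · refine ⟨fun h => ?_, hx2, ⟨fun h => ?_, hy2l, hy2r⟩⟩
      · rw [hxc] at h; exact absurd h.1 (by simp)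
      · rw [hylc] at h; exact absurd h.1 (by simp)
    · cases cp with
      | red => simpa using BH.red hxbh (BH.red hl hr)
      | black => simpa using BH.black hxbh (BH.red hl hr)
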